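/- For conditional events A|H and B|K, the Goodman–Nguyen inclusion A|H ⊆ B|K (i.e., AH¬BK = AH¬K = ¬HBK = ∅) holds if and only if the Kleene–de Finetti conjunction satisfies (A|H) ∧_K (B|K) = A|H, where (A|H) ∧_K (B|K) := AHBK | (AHBK ∨ ¬AH ∨ ¬BK). -/
import Mathlib


/-- The three truth values of de Finetti's trivalent logic. -/
inductive TV : Type
  | true : TV
  | false : TV
  | void : TV
deriving DecidableEq

open Classical in
/-- The conditional event `E|F`: true on `E∩F`, false on `Eᶜ∩F`, void on `Fᶜ`. -/
noncomputable def condEv {Ω : Type*} (E F : Set Ω) : Ω → TV := fun ω =>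
  if ω ∈ F then (if ω ∈ E then TV.true else TV.false) else TV.void

/-- The Kleene–Łukasiewicz–Heyting–de Finetti conjunction
`(A|H) ∧_K (B|K) = AHBK | (AHBK ∨ ¬AH ∨ ¬BK)`. -/
noncomputable def conjK {Ω : Type*} (A H B K : Set Ω) : Ω → TV :=
  condEv (A ∩ H ∩ (B ∩ K)) (A ∩ H ∩ (B ∩ K) ∪ Aᶜ ∩ H ∪ Bᶜ ∩ K)

/-- Property P1 for `∧_K`: the Goodman–Nguyen inclusion `A|H ⊆ B|K`
(i.e. `AH ⊆ BK` and `¬BK ⊆ ¬AH`) holds iff `(A|H) ∧_K (B|K) = A|H`. -/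
theorem gn_iff_conjK_eq {Ω : Type*} (A H B K : Set Ω)
    (hH : H.Nonempty) (hK : K.Nonempty) :
    (A ∩ H ⊆ B ∩ K ∧ Bᶜ ∩ K ⊆ Aᶜ ∩ H) ↔ conjK A H B K = condEv A H := by
  constructor
  · rintro ⟨h1, h2⟩
    funext ω
    have h1' := @h1 ω
    have h2' := @h2 ω
    simp only [Set.mem_inter_iff, Set.mem_compl_iff] at h1' h2'
    simp only [conjK, condEv, Set.mem_union, Set.mem_inter_iff, Set.mem_compl_iff]
    by_cases hA : ω ∈ A <;> by_cases hHm : ω ∈ H <;> by_cases hB : ω ∈ B <;>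
      by_cases hKm : ω ∈ K <;> simp_all
  · intro h
    constructor
    · intro ω hω
      have := congrFun h ω
      simp only [conjK, condEv, Set.mem_union, Set.mem_inter_iff, Set.mem_compl_iff] at this
      obtain ⟨hA, hHm⟩ := hω
      by_cases hB : ω ∈ B <;> by_cases hKm : ω ∈ K <;> simp_all
    · intro ω hω
      have := congrFun h ω
      simp only [conjK, condEv, Set.mem_union, Set.mem_inter_iff, Set.mem_compl_iff] at this
      obtain ⟨hB, hKm⟩ := hω
      simp only [Set.mem_compl_iff] at hB
      by_cases hA : ω ∈ A <;> by_cases hHm : ω ∈ H <;> simp_all
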